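/- (Proposition 5.7 for ℤA_{n+1} modulo ⟨τ^k⟩) Fix n ≥ 1 and k ≥ 1. A subset C ⊆ ZMod k × {0,…,n} is a configuration of the quotient translation quiver Q_k = ℤA_{n+1}/⟨τ^k⟩ if and only if π^{−1}(C) is a configuration of ℤA_{n+1}. Consequently π induces a bijection between the configurations C of ℤA_{n+1} satisfying τ^k(C) = C and the configurations of Q_k. -/

import Mathlib

/-- Sum over the arrows `y → v` of `ℤA_{n+1}` of the value `f v`. The vertex set of
`ℤA_{n+1}` is `ℤ × {0,…,n}`, with arrows `(q,s) → (q,s+1)` for `s < n` and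
`(q,s) → (q+1,s-1)` for `0 < s`. -/
def stepA (n : ℕ) (f : ℤ × ℕ → ℕ) (y : ℤ × ℕ) : ℤ :=
  (if y.2 < n then (f (y.1, y.2 + 1) : ℤ) else 0) +
    (if 0 < y.2 then (f (y.1 + 1, y.2 - 1) : ℤ) else 0)

/-- `hA n x k y` is `h_k(y,x)` for `ℤA_{n+1}`: `h_0(y,x) = δ(y,x)` and, for `k > 0`,
`h_k(y,x) = max(h'_k(y,x), 0)` where
`h'_k(y,x) = ∑_{y → v} h_{k-1}(v,x) - h_{k-2}(τ⁻¹ y, x)` and `τ⁻¹(q,s) = (q+1,s)`. -/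
def hA (n : ℕ) (x : ℤ × ℕ) : ℕ → ℤ × ℕ → ℕ
  | 0 => fun y => if y = x then 1 else 0
  | 1 => fun y => (stepA n (hA n x 0) y).toNat
  | k + 2 => fun y =>
      (stepA n (hA n x (k + 1)) y - (hA n x k (y.1 + 1, y.2) : ℤ)).toNat

/-- `h'A n x k y` is `h'_k(y,x)` (meaningful for `k ≥ 1`):
`h'_k(y,x) = ∑_{y → v} h_{k-1}(v,x) - h_{k-2}(τ⁻¹ y, x) ∈ ℤ`. -/
def h'A (n : ℕ) (x : ℤ × ℕ) (k : ℕ) (y : ℤ × ℕ) : ℤ :=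
  stepA n (hA n x (k - 1)) y -
    (if 2 ≤ k then (hA n x (k - 2) (y.1 + 1, y.2) : ℤ) else 0)

/-- `hTotA n y x = h(y,x) = ∑_{k ≥ 0} h_k(y,x)` (a finite sum, via `finsum`). -/
noncomputable def hTotA (n : ℕ) (y x : ℤ × ℕ) : ℕ := ∑ᶠ k : ℕ, hA n x k y

/-- `ω` for `ℤA_{n+1}`: `ω(p,r) = (p+r-n, n-r)`. -/
def ωA (n : ℕ) (v : ℤ × ℕ) : ℤ × ℕ := (v.1 + v.2 - n, n - v.2)

/-- A configuration of `ℤA_{n+1}`: a set `C` of vertices of `ℤA_{n+1}` such that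
(C1) every vertex `y` satisfies `h(y,c) > 0` for some `c ∈ C`, and
(C2) `ω C = C` and for `c, d ∈ C`, `h(d,c)` is `2` if `d = c = ω c`, `1` if
`d = c ≠ ω c` or `d = ω c ≠ c`, and `0` otherwise. -/
def IsConfigA (n : ℕ) (C : Set (ℤ × ℕ)) : Prop :=
  (∀ v ∈ C, v.2 ≤ n) ∧
    (∀ y : ℤ × ℕ, y.2 ≤ n → ∃ c ∈ C, 0 < hTotA n y c) ∧
    ωA n '' C = C ∧
    ∀ c ∈ C, ∀ d ∈ C,
      hTotA n d c =
        if d = c ∧ c = ωA n c then 2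
        else if d = c ∨ d = ωA n c then 1
        else 0

/-- Sum over the arrows `y → v` of the quotient quiver `ℤA_{n+1}/⟨τ^k⟩`
(vertex set `ZMod k × {0,…,n}`) of the value `f v`. -/
def stepQ (n k : ℕ) (f : ZMod k × ℕ → ℕ) (y : ZMod k × ℕ) : ℤ :=
  (if y.2 < n then (f (y.1, y.2 + 1) : ℤ) else 0) +
    (if 0 < y.2 then (f (y.1 + 1, y.2 - 1) : ℤ) else 0)

/-- `hQ n k x m y` is `ĥ_m(y,x)` on `ℤA_{n+1}/⟨τ^k⟩`, defined by the same recursion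
as `h_m` on `ℤA_{n+1}`, with `τ⁻¹(q,s) = (q+1,s)`. -/
def hQ (n k : ℕ) (x : ZMod k × ℕ) : ℕ → ZMod k × ℕ → ℕ
  | 0 => fun y => if y = x then 1 else 0
  | 1 => fun y => (stepQ n k (hQ n k x 0) y).toNat
  | m + 2 => fun y =>
      (stepQ n k (hQ n k x (m + 1)) y - (hQ n k x m (y.1 + 1, y.2) : ℤ)).toNat

/-- `hTotQ n k y x = ĥ(y,x) = ∑_{m ≥ 0} ĥ_m(y,x)` (a finite sum, via `finsum`). -/
noncomputable def hTotQ (n k : ℕ) (y x : ZMod k × ℕ) : ℕ := ∑ᶠ m : ℕ, hQ n k x m y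

/-- `ω` on the quotient quiver `ℤA_{n+1}/⟨τ^k⟩`: `ω(p,r) = (p+r-n, n-r)` with the
first coordinate computed in `ZMod k`. -/
def ωQ (n k : ℕ) (v : ZMod k × ℕ) : ZMod k × ℕ :=
  (v.1 + (v.2 : ZMod k) - (n : ZMod k), n - v.2)

/-- A configuration of the quotient translation quiver `ℤA_{n+1}/⟨τ^k⟩`. -/
def IsConfigQ (n k : ℕ) (C : Set (ZMod k × ℕ)) : Prop :=
  (∀ v ∈ C, v.2 ≤ n) ∧
    (∀ y : ZMod k × ℕ, y.2 ≤ n → ∃ c ∈ C, 0 < hTotQ n k y c) ∧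
    ωQ n k '' C = C ∧
    ∀ c ∈ C, ∀ d ∈ C,
      hTotQ n k d c =
        if d = c ∧ c = ωQ n k c then 2
        else if d = c ∨ d = ωQ n k c then 1
        else 0

section Gen

variable {R : Type*} [CommRing R] [DecidableEq R]

def stepG (n : ℕ) (f : R × ℕ → ℕ) (y : R × ℕ) : ℤ :=
  (if y.2 < n then (f (y.1, y.2 + 1) : ℤ) else 0) +
    (if 0 < y.2 then (f (y.1 + 1, y.2 - 1) : ℤ) else 0)

def hG (n : ℕ) (x : R × ℕ) : ℕ → R × ℕ → ℕ
  | 0 => fun y => if y = x then 1 else 0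
  | 1 => fun y => (stepG n (hG n x 0) y).toNat
  | m + 2 => fun y =>
      (stepG n (hG n x (m + 1)) y - (hG n x m (y.1 + 1, y.2) : ℤ)).toNat

/-- closed-form condition -/
def CG (n m r s : ℕ) (a c : R) : Prop :=
  ∃ Δ : ℕ, (m + r = 2 * Δ + s ∧ Δ ≤ r ∧ r ≤ Δ + s ∧ Δ + s ≤ n) ∧ c = a + (Δ : R)

lemma hG_eq_hA (n : ℕ) (x : ℤ × ℕ) : ∀ m (y : ℤ × ℕ), hG n x m y = hA n x m y := by
  intro m
  induction m using Nat.twoStepInduction with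
  | zero => intro y; rfl
  | one => intro y; rfl
  | more m ih1 ih2 =>
    intro y
    simp only [hG, hA, stepG, stepA, ih1, ih2]

lemma hG_eq_hQ (n k : ℕ) (x : ZMod k × ℕ) : ∀ m (y : ZMod k × ℕ), hG n x m y = hQ n k x m y := by
  intro m
  induction m using Nat.twoStepInduction with
  | zero => intro y; rfl
  | one => intro y; rfl
  | more m ih1 ih2 =>
    intro y
    simp only [hG, hQ, stepG, stepQ, ih1, ih2]


open scoped Classical in
lemma hG_closed (n : ℕ) (c : R) (s : ℕ) (hs : s ≤ n) :
    ∀ (m : ℕ) (a : R) (r : ℕ), r ≤ n →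
      hG n (c, s) m (a, r) = if CG n m r s a c then 1 else 0 := by
  intro m
  induction m using Nat.twoStepInduction with
  | zero =>
    intro a r hr
    simp only [hG]
    by_cases h : a = c ∧ r = s
    · obtain ⟨hac, hrs⟩ := h
      rw [if_pos (by simp [hac, hrs] : ((a, r) : R × ℕ) = (c, s)),
        if_pos ⟨0, ⟨by omega, by omega, by omega, by omega⟩, by simp [hac]⟩]
    · have h1 : ¬(((a, r) : R × ℕ) = (c, s)) := by
        simp only [Prod.mk.injEq]; exact h
      have h2 : ¬ CG n 0 r s a c := by
        rintro ⟨Δ, ⟨e1, e2, e3, e4⟩, ez⟩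
        have hΔ : Δ = 0 := by omega
        subst hΔ
        exact h ⟨(by simpa using ez : c = a).symm, by omega⟩
      rw [if_neg h1, if_neg h2]
  | one =>
    intro a r hr
    simp only [hG, stepG]
    by_cases hpar : ∃ Δ : ℕ, 1 + r = 2 * Δ + s
    · obtain ⟨Δ₀, hΔ⟩ := hpar
      by_cases hz : c = a + (Δ₀ : R)
      · have E1 : (if r < n then ((if ((a, r + 1) : R × ℕ) = (c, s) then (1 : ℕ) else 0 : ℕ) : ℤ) else 0)
            = if r < n ∧ s = r + 1 then 1 else 0 := by
          by_cases h : r < n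
          · by_cases h2 : s = r + 1
            · have hΔ0 : Δ₀ = 0 := by omega
              have hac : a = c := by rw [hz, hΔ0]; simp
              have hp : ((a, r + 1) : R × ℕ) = (c, s) := by
                simp only [Prod.mk.injEq]; exact ⟨hac, by omega⟩
              simp [h, h2, hp]
            · have hp : ¬(((a, r + 1) : R × ℕ) = (c, s)) := by
                simp only [Prod.mk.injEq]; rintro ⟨-, h3⟩; omega
              simp [h, h2, hp]
          · simp [h]
        have E2 : (if 0 < r then ((if ((a + 1, r - 1) : R × ℕ) = (c, s) then (1 : ℕ) else 0 : ℕ) : ℤ) else 0)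
            = if 0 < r ∧ s + 1 = r then 1 else 0 := by
          by_cases h : 0 < r
          · by_cases h2 : s + 1 = r
            · have hΔ1 : Δ₀ = 1 := by omega
              have hac : a + 1 = c := by rw [hz, hΔ1]; simp
              have hp : ((a + 1, r - 1) : R × ℕ) = (c, s) := by
                simp only [Prod.mk.injEq]; exact ⟨hac, by omega⟩
              simp [h, h2, hp]
            · have hp : ¬(((a + 1, r - 1) : R × ℕ) = (c, s)) := by
                simp only [Prod.mk.injEq]; rintro ⟨-, h3⟩; omega
              simp [h, h2, hp]
          · simp [h]
        rw [E1, E2]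
        have EP : CG n 1 r s a c ↔ (Δ₀ ≤ r ∧ r ≤ Δ₀ + s ∧ Δ₀ + s ≤ n) := by
          constructor
          · rintro ⟨Δ, ⟨e1, e2, e3, e4⟩, ez⟩
            have : Δ = Δ₀ := by omega
            subst this
            exact ⟨e2, e3, e4⟩
          · rintro ⟨h1, h2, h3⟩
            exact ⟨Δ₀, ⟨by omega, h1, h2, h3⟩, hz⟩
        rw [if_congr EP rfl rfl]
        split_ifs <;> omega
      · have hp1 : ¬(((a, r + 1) : R × ℕ) = (c, s)) := by
          simp only [Prod.mk.injEq]
          rintro ⟨hac, hsr⟩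
          have hΔ0 : Δ₀ = 0 := by omega
          refine hz ?_
          rw [hΔ0]
          simpa using hac.symm
        have hp2 : 0 < r → ¬(((a + 1, r - 1) : R × ℕ) = (c, s)) := by
          intro h
          simp only [Prod.mk.injEq]
          rintro ⟨hac, hsr⟩
          have hΔ1 : Δ₀ = 1 := by omega
          refine hz ?_
          rw [hΔ1]
          simpa using hac.symm
        have NP : ¬ CG n 1 r s a c := by
          rintro ⟨Δ, ⟨e1, e2, e3, e4⟩, ez⟩
          have : Δ = Δ₀ := by omega
          subst this
          exact hz ez
        have E1 : (if r < n then ((if ((a, r + 1) : R × ℕ) = (c, s) then (1 : ℕ) else 0 : ℕ) : ℤ) else 0) = 0 := by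
          by_cases h : r < n <;> simp [h, hp1]
        have E2 : (if 0 < r then ((if ((a + 1, r - 1) : R × ℕ) = (c, s) then (1 : ℕ) else 0 : ℕ) : ℤ) else 0) = 0 := by
          by_cases h : 0 < r
          · simp [h, hp2 h]
          · simp [h]
        rw [E1, E2, if_neg NP]
        simp
    · have hp1 : ¬(((a, r + 1) : R × ℕ) = (c, s)) := by
        simp only [Prod.mk.injEq]
        rintro ⟨-, hsr⟩
        exact hpar ⟨0, by omega⟩
      have hp2 : 0 < r → ¬(((a + 1, r - 1) : R × ℕ) = (c, s)) := by
        intro h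
        simp only [Prod.mk.injEq]
        rintro ⟨-, hsr⟩
        exact hpar ⟨1, by omega⟩
      have NP : ¬ CG n 1 r s a c := by
        rintro ⟨Δ, ⟨e1, -⟩, -⟩
        exact hpar ⟨Δ, e1⟩
      have E1 : (if r < n then ((if ((a, r + 1) : R × ℕ) = (c, s) then (1 : ℕ) else 0 : ℕ) : ℤ) else 0) = 0 := by
        by_cases h : r < n <;> simp [h, hp1]
      have E2 : (if 0 < r then ((if ((a + 1, r - 1) : R × ℕ) = (c, s) then (1 : ℕ) else 0 : ℕ) : ℤ) else 0) = 0 := by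
        by_cases h : 0 < r
        · simp [h, hp2 h]
        · simp [h]
      rw [E1, E2, if_neg NP]
      simp
  | more m ihm ihm1 =>
    intro a r hr
    simp only [hG, stepG]
    rw [ihm (a + 1) r hr]
    have E1 : (if r < n then ((hG n (c, s) (m + 1) (a, r + 1) : ℕ) : ℤ) else 0)
        = if r < n ∧ CG n (m + 1) (r + 1) s a c then 1 else 0 := by
      by_cases h : r < n
      · rw [if_pos h, ihm1 a (r + 1) (by omega)]
        by_cases h2 : CG n (m + 1) (r + 1) s a c
        · simp [h, h2]
        · simp [h, h2]
      · simp [h]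
    have E2 : (if 0 < r then ((hG n (c, s) (m + 1) (a + 1, r - 1) : ℕ) : ℤ) else 0)
        = if 0 < r ∧ CG n (m + 1) (r - 1) s (a + 1) c then 1 else 0 := by
      by_cases h : 0 < r
      · rw [if_pos h, ihm1 (a + 1) (r - 1) (by omega)]
        by_cases h2 : CG n (m + 1) (r - 1) s (a + 1) c
        · simp [h, h2]
        · simp [h, h2]
      · simp [h]
    rw [E1, E2]
    by_cases hpar : ∃ Δ : ℕ, m + 2 + r = 2 * Δ + s
    · obtain ⟨Δ₀, hΔ⟩ := hpar
      by_cases hz : c = a + (Δ₀ : R)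
      · have hz' : 1 ≤ Δ₀ → c = (a + 1) + ((Δ₀ - 1 : ℕ) : R) := by
          intro h1
          rw [Nat.cast_sub h1, Nat.cast_one, hz]
          ring
        have I1 : (r < n ∧ CG n (m + 1) (r + 1) s a c)
            ↔ (r < n ∧ Δ₀ ≤ r + 1 ∧ r + 1 ≤ Δ₀ + s ∧ Δ₀ + s ≤ n) := by
          constructor
          · rintro ⟨hg, Δ, ⟨e1, e2, e3, e4⟩, ez⟩
            have : Δ = Δ₀ := by omega
            subst this
            exact ⟨hg, e2, e3, e4⟩
          · rintro ⟨hg, h1, h2, h3⟩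
            exact ⟨hg, Δ₀, ⟨by omega, h1, h2, h3⟩, hz⟩
        have I2 : (0 < r ∧ CG n (m + 1) (r - 1) s (a + 1) c)
            ↔ (0 < r ∧ 1 ≤ Δ₀ ∧ Δ₀ - 1 ≤ r - 1 ∧ r - 1 ≤ (Δ₀ - 1) + s ∧ (Δ₀ - 1) + s ≤ n) := by
          constructor
          · rintro ⟨hg, Δ, ⟨e1, e2, e3, e4⟩, ez⟩
            have h1 : Δ₀ = Δ + 1 := by omega
            refine ⟨hg, by omega, by omega, by omega, by omega⟩
          · rintro ⟨hg, h1, h2, h3, h4⟩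
            exact ⟨hg, Δ₀ - 1, ⟨by omega, h2, h3, h4⟩, hz' h1⟩
        have I3 : CG n m r s (a + 1) c
            ↔ (1 ≤ Δ₀ ∧ Δ₀ - 1 ≤ r ∧ r ≤ (Δ₀ - 1) + s ∧ (Δ₀ - 1) + s ≤ n) := by
          constructor
          · rintro ⟨Δ, ⟨e1, e2, e3, e4⟩, ez⟩
            have h1 : Δ₀ = Δ + 1 := by omega
            refine ⟨by omega, by omega, by omega, by omega⟩
          · rintro ⟨h1, h2, h3, h4⟩
            exact ⟨Δ₀ - 1, ⟨by omega, h2, h3, h4⟩, hz' h1⟩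
        have IP : CG n (m + 2) r s a c ↔ (Δ₀ ≤ r ∧ r ≤ Δ₀ + s ∧ Δ₀ + s ≤ n) := by
          constructor
          · rintro ⟨Δ, ⟨e1, e2, e3, e4⟩, ez⟩
            have : Δ = Δ₀ := by omega
            subst this
            exact ⟨e2, e3, e4⟩
          · rintro ⟨h1, h2, h3⟩
            exact ⟨Δ₀, ⟨by omega, h1, h2, h3⟩, hz⟩
        rw [if_congr I1 rfl rfl, if_congr I2 rfl rfl, if_congr I3 rfl rfl, if_congr IP rfl rfl]
        split_ifs <;> omega
      · have N1 : ¬(r < n ∧ CG n (m + 1) (r + 1) s a c) := by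
          rintro ⟨-, Δ, ⟨e1, -⟩, ez⟩
          have : Δ = Δ₀ := by omega
          subst this
          exact hz ez
        have N2 : ¬(0 < r ∧ CG n (m + 1) (r - 1) s (a + 1) c) := by
          rintro ⟨hg, Δ, ⟨e1, -⟩, ez⟩
          have h1 : Δ₀ = Δ + 1 := by omega
          apply hz
          rw [ez, h1]
          push_cast
          ring
        have N3 : ¬ CG n m r s (a + 1) c := by
          rintro ⟨Δ, ⟨e1, -⟩, ez⟩
          have h1 : Δ₀ = Δ + 1 := by omega
          apply hz
          rw [ez, h1]
          push_cast
          ring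
        have NP : ¬ CG n (m + 2) r s a c := by
          rintro ⟨Δ, ⟨e1, -⟩, ez⟩
          have : Δ = Δ₀ := by omega
          subst this
          exact hz ez
        rw [if_neg N1, if_neg N2, if_neg N3, if_neg NP]
        simp
    · have N1 : ¬(r < n ∧ CG n (m + 1) (r + 1) s a c) := by
        rintro ⟨-, Δ, ⟨e1, -⟩, -⟩
        exact hpar ⟨Δ, by omega⟩
      have N2 : ¬(0 < r ∧ CG n (m + 1) (r - 1) s (a + 1) c) := by
        rintro ⟨hg, Δ, ⟨e1, -⟩, -⟩
        exact hpar ⟨Δ + 1, by omega⟩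
      have N3 : ¬ CG n m r s (a + 1) c := by
        rintro ⟨Δ, ⟨e1, -⟩, -⟩
        exact hpar ⟨Δ + 1, by omega⟩
      have NP : ¬ CG n (m + 2) r s a c := by
        rintro ⟨Δ, ⟨e1, -⟩, -⟩
        exact hpar ⟨Δ, e1⟩
      rw [if_neg N1, if_neg N2, if_neg N3, if_neg NP]
      simp

end Gen

lemma hA_closed (n : ℕ) (p q : ℤ) (r s : ℕ) (hr : r ≤ n) (hs : s ≤ n) (m : ℕ) :
    hA n (q, s) m (p, r) =
      if ((m : ℤ) + r = 2 * (q - p) + s ∧ p ≤ q ∧ q ≤ p + r ∧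
          (r : ℤ) ≤ (q - p) + s ∧ (q - p) + (s : ℤ) ≤ n) then 1 else 0 := by
  classical
  rw [← hG_eq_hA, hG_closed n q s hs m p r hr]
  refine if_congr ?_ rfl rfl
  constructor
  · rintro ⟨Δ, ⟨e1, e2, e3, e4⟩, ez⟩
    refine ⟨by omega, by omega, by omega, by omega, by omega⟩
  · rintro ⟨e0, e1, e2, e3, e4⟩
    exact ⟨(q - p).toNat, ⟨by omega, by omega, by omega, by omega⟩, by omega⟩

lemma hTotA_closed (n : ℕ) (p q : ℤ) (r s : ℕ) (hr : r ≤ n) (hs : s ≤ n) :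
    hTotA n (p, r) (q, s) =
      if (p ≤ q ∧ q ≤ p + r ∧ (r : ℤ) ≤ (q - p) + s ∧ (q - p) + (s : ℤ) ≤ n) then 1 else 0 := by
  unfold hTotA
  by_cases hc : p ≤ q ∧ q ≤ p + (r : ℤ) ∧ (r : ℤ) ≤ (q - p) + s ∧ (q - p) + (s : ℤ) ≤ n
  · obtain ⟨h1, h2, h3, h4⟩ := hc
    rw [if_pos ⟨h1, h2, h3, h4⟩]
    rw [finsum_eq_single _ ((2 * (q - p) + s - r).toNat)]
    · rw [hA_closed n p q r s hr hs, if_pos ⟨by omega, h1, h2, h3, h4⟩]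
    · intro m hm
      rw [hA_closed n p q r s hr hs, if_neg]
      rintro ⟨e0, -⟩
      exact hm (by omega)
  · rw [if_neg hc, finsum_eq_zero_of_forall_eq_zero]
    intro m
    rw [hA_closed n p q r s hr hs, if_neg]
    rintro ⟨e0, e1, e2, e3, e4⟩
    exact hc ⟨e1, e2, e3, e4⟩

open scoped Classical in
lemma hQ_closed (n k : ℕ) (cc : ZMod k) (s : ℕ) (hs : s ≤ n) (m : ℕ) (a : ZMod k) (r : ℕ)
    (hr : r ≤ n) :
    hQ n k (cc, s) m (a, r) = if CG n m r s a cc then 1 else 0 := by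
  rw [← hG_eq_hQ, hG_closed n cc s hs m a r hr]

lemma hTotQ_sum (n k : ℕ) (a cc : ZMod k) (r s : ℕ) (hr : r ≤ n) (hs : s ≤ n) :
    hTotQ n k (a, r) (cc, s) =
      ∑ Δ ∈ Finset.Icc (r - s) (min r (n - s)),
        if cc = a + (Δ : ZMod k) then 1 else 0 := by
  classical
  unfold hTotQ
  rw [finsum_eq_finset_sum_of_support_subset _ (s := Finset.range (3 * n + 1)) ?hsupp]
  case hsupp =>
    intro m hm
    simp only [Function.mem_support] at hm
    simp only [Finset.coe_range, Set.mem_Iio]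
    rw [hQ_closed n k cc s hs m a r hr] at hm
    by_contra hmn
    refine hm ?_
    rw [if_neg]
    rintro ⟨Δ, ⟨e1, e2, e3, e4⟩, -⟩
    omega
  · have himg : (Finset.Icc (r - s) (min r (n - s))).image (fun Δ => 2 * Δ + s - r)
        ⊆ Finset.range (3 * n + 1) := by
      intro m hm
      simp only [Finset.mem_image, Finset.mem_Icc] at hm
      obtain ⟨Δ, hΔ, rfl⟩ := hm
      simp only [Finset.mem_range]
      omega
    have hzero : ∀ m ∈ Finset.range (3 * n + 1),
        m ∉ (Finset.Icc (r - s) (min r (n - s))).image (fun Δ => 2 * Δ + s - r) →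
        hQ n k (cc, s) m (a, r) = 0 := by
      intro m _ hm
      rw [hQ_closed n k cc s hs m a r hr, if_neg]
      rintro ⟨Δ, ⟨e1, e2, e3, e4⟩, ez⟩
      exact hm (Finset.mem_image.mpr ⟨Δ, Finset.mem_Icc.mpr ⟨by omega, by omega⟩, by omega⟩)
    rw [← Finset.sum_subset himg hzero]
    rw [Finset.sum_image (by intro Δ₁ h1 Δ₂ h2 he; simp only [Finset.mem_coe, Finset.mem_Icc] at h1 h2; simp only at he; omega)]
    refine Finset.sum_congr rfl ?_
    intro Δ hΔ
    simp only [Finset.mem_Icc] at hΔ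
    rw [hQ_closed n k cc s hs _ a r hr]
    refine if_congr ?_ rfl rfl
    constructor
    · rintro ⟨Δ', ⟨e1, e2, e3, e4⟩, ez⟩
      have : Δ' = Δ := by omega
      subst this
      exact ez
    · intro hz
      exact ⟨Δ, ⟨by omega, by omega, by omega, by omega⟩, hz⟩

lemma pi_omegaA (n k : ℕ) (v : ℤ × ℕ) :
    ((((ωA n v).1 : ℤ) : ZMod k), (ωA n v).2) = ωQ n k (((v.1 : ℤ) : ZMod k), v.2) := by
  unfold ωA ωQ
  simp only [Prod.mk.injEq]
  exact ⟨by push_cast; ring, trivial⟩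

lemma omegaQ_inj (n k : ℕ) {u v : ZMod k × ℕ} (h : ωQ n k u = ωQ n k v)
    (hu : u.2 ≤ n) (hv : v.2 ≤ n) : u = v := by
  unfold ωQ at h
  rw [Prod.mk.injEq] at h
  obtain ⟨h1, h2⟩ := h
  have h3 : u.2 = v.2 := by omega
  refine Prod.ext ?_ h3
  rw [h3] at h1
  linear_combination h1

lemma cA_ne_omegaA (n : ℕ) (hn : 1 ≤ n) (c : ℤ × ℕ) : ¬(c = ωA n c) := by
  obtain ⟨c1, c2⟩ := c
  unfold ωA
  rw [Prod.mk.injEq]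
  rintro ⟨h1, h2⟩
  simp only at h1 h2
  omega

lemma cast_val_int (k : ℕ) (hk : 1 ≤ k) (a : ZMod k) : ((a.val : ℤ) : ZMod k) = a := by
  haveI : NeZero k := ⟨by omega⟩
  rw [Int.cast_natCast]
  exact ZMod.natCast_rightInverse a

lemma pi_of_eq_omegaA (n k : ℕ) {p q : ℤ} {r s : ℕ} (h : ((p, r) : ℤ × ℕ) = ωA n (q, s)) :
    (((p : ℤ) : ZMod k), r) = ωQ n k (((q : ℤ) : ZMod k), s) := by
  have h2 := pi_omegaA n k ((q, s) : ℤ × ℕ)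
  rw [← h] at h2
  exact h2


lemma keyIff (n k : ℕ) (hn : 1 ≤ n) (hk : 1 ≤ k) (C : Set (ZMod k × ℕ)) :
    IsConfigQ n k C ↔
      IsConfigA n ((fun v : ℤ × ℕ => (((v.1 : ℤ) : ZMod k), v.2)) ⁻¹' C) := by
  haveI : NeZero k := ⟨by omega⟩
  constructor
  · rintro ⟨q1, q2, q3, q4⟩
    refine ⟨?_, ?_, ?_, ?_⟩
    · intro v hv
      exact q1 _ hv
    · rintro ⟨p, r⟩ hy
      simp only at hy
      obtain ⟨c, hcC, hpos⟩ := q2 ((p : ZMod k), r) hy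
      obtain ⟨cc, s⟩ := c
      have hs : s ≤ n := q1 _ hcC
      rw [hTotQ_sum n k (p : ZMod k) cc r s hy hs] at hpos
      have hex : ∃ Δ ∈ Finset.Icc (r - s) (min r (n - s)),
          cc = (p : ZMod k) + (Δ : ZMod k) := by
        by_contra hcon
        push_neg at hcon
        rw [Finset.sum_eq_zero (fun Δ hΔ => if_neg (hcon Δ hΔ))] at hpos
        exact Nat.lt_irrefl 0 hpos
      obtain ⟨Δ, hΔmem, hΔ⟩ := hex
      simp only [Finset.mem_Icc] at hΔmem
      refine ⟨(p + Δ, s), ?_, ?_⟩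
      · show (((p + Δ : ℤ) : ZMod k), s) ∈ C
        have hcast : ((p + (Δ : ℤ) : ℤ) : ZMod k) = cc := by push_cast; rw [hΔ]
        rw [hcast]
        exact hcC
      · rw [hTotA_closed n p (p + Δ) r s hy hs,
          if_pos ⟨by omega, by omega, by omega, by omega⟩]
        norm_num
    · ext x
      constructor
      · rintro ⟨w, hw, rfl⟩
        show (((ωA n w).1 : ZMod k), (ωA n w).2) ∈ C
        rw [pi_omegaA n k w, ← q3]
        exact ⟨_, hw, rfl⟩
      · intro hx
        have hx2 : x.2 ≤ n := q1 _ hx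
        have hxC : (((x.1 : ℤ) : ZMod k), x.2) ∈ C := hx
        rw [← q3] at hxC
        obtain ⟨c, hc, hcx⟩ := hxC
        refine ⟨(x.1 + x.2, n - x.2), ?_, ?_⟩
        · show (((x.1 + x.2 : ℤ) : ZMod k), n - x.2) ∈ C
          have hd : ωQ n k (((x.1 + (x.2 : ℤ) : ℤ) : ZMod k), n - x.2) = ωQ n k c := by
            rw [hcx]
            unfold ωQ
            simp only [Prod.mk.injEq]
            constructor
            · push_cast [Nat.cast_sub hx2]
              ring
            · omega
          have heq := omegaQ_inj n k hd (Nat.sub_le n x.2) (q1 _ hc)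
          rw [heq]
          exact hc
        · refine Prod.ext ?_ ?_
          · show x.1 + (x.2 : ℤ) + ((n - x.2 : ℕ) : ℤ) - (n : ℤ) = x.1
            push_cast [Nat.cast_sub hx2]
            ring
          · show n - (n - x.2) = x.2
            omega
    · rintro ⟨q, s⟩ hcP ⟨p, r⟩ hdP
      have hcC : (((q : ℤ) : ZMod k), s) ∈ C := hcP
      have hdC : (((p : ℤ) : ZMod k), r) ∈ C := hdP
      have hcs : s ≤ n := q1 _ hcC
      have hdr : r ≤ n := q1 _ hdC
      have hval := q4 _ hcC _ hdC
      rw [hTotQ_sum n k (p : ZMod k) (q : ZMod k) r s hdr hcs] at hval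
      simp only [Finset.sum_boole, Nat.cast_id] at hval
      have hmemT : ∀ Δ : ℕ,
          Δ ∈ (Finset.Icc (r - s) (min r (n - s))).filter
              (fun Δ : ℕ => (q : ZMod k) = (p : ZMod k) + (Δ : ZMod k)) ↔
            (r - s ≤ Δ ∧ Δ ≤ min r (n - s) ∧ (q : ZMod k) = (p : ZMod k) + (Δ : ZMod k)) := by
        intro Δ
        constructor
        · intro h
          exact ⟨(Finset.mem_Icc.mp (Finset.mem_filter.mp h).1).1,
            (Finset.mem_Icc.mp (Finset.mem_filter.mp h).1).2, (Finset.mem_filter.mp h).2⟩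
        · rintro ⟨h1, h2, h3⟩
          exact Finset.mem_filter.mpr ⟨Finset.mem_Icc.mpr ⟨h1, h2⟩, h3⟩
      have hiff : (p ≤ q ∧ q ≤ p + r ∧ (r : ℤ) ≤ (q - p) + s ∧ (q - p) + (s : ℤ) ≤ n) →
          (q - p).toNat ∈ (Finset.Icc (r - s) (min r (n - s))).filter
            (fun Δ : ℕ => (q : ZMod k) = (p : ZMod k) + (Δ : ZMod k)) := by
        intro hco
        rw [hmemT]
        refine ⟨by omega, by omega, ?_⟩
        have h0 : (((q - p).toNat : ℕ) : ZMod k) = ((q - p : ℤ) : ZMod k) := by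
          rw [← Int.cast_natCast, Int.toNat_of_nonneg (by omega : (0:ℤ) ≤ q - p)]
        rw [h0]
        push_cast
        ring
      have hnofix : ¬(((q, s) : ℤ × ℕ) = ωA n (q, s)) := cA_ne_omegaA n hn _
      rw [hTotA_closed n p q r s hdr hcs,
        if_neg (show ¬(((p, r) : ℤ × ℕ) = (q, s) ∧ ((q, s) : ℤ × ℕ) = ωA n (q, s)) from
          fun hh => hnofix hh.2)]
      by_cases hE1 : (((p : ℤ) : ZMod k), r) = ((((q : ℤ) : ZMod k), s) : ZMod k × ℕ)
      · have hrs : r = s := congrArg Prod.snd hE1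
        have hpq : ((p : ℤ) : ZMod k) = ((q : ℤ) : ZMod k) := congrArg Prod.fst hE1
        by_cases hFix : ((((q : ℤ) : ZMod k), s) : ZMod k × ℕ) = ωQ n k (((q : ℤ) : ZMod k), s)
        · rw [if_pos ⟨hE1, hFix⟩] at hval
          have hFix2 : s = n - s := congrArg Prod.snd hFix
          have hn2s : n = 2 * s := by omega
          have hs1 : 1 ≤ s := by omega
          have hFix1 : ((q : ℤ) : ZMod k)
              = ((q : ℤ) : ZMod k) + ((s : ℕ) : ZMod k) - ((n : ℕ) : ZMod k) :=
            congrArg Prod.fst hFix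
          have hsz : ((s : ℕ) : ZMod k) = 0 := by
            have h2 : ((2 * s : ℕ) : ZMod k) = ((s : ℕ) : ZMod k) := by
              rw [← hn2s]
              linear_combination hFix1
            push_cast at h2
            linear_combination h2
          have h0T : (0 : ℕ) ∈ (Finset.Icc (r - s) (min r (n - s))).filter
              (fun Δ : ℕ => (q : ZMod k) = (p : ZMod k) + (Δ : ZMod k)) := by
            rw [hmemT]
            refine ⟨by omega, by omega, by simpa using hpq.symm⟩
          have hsT : s ∈ (Finset.Icc (r - s) (min r (n - s))).filter
              (fun Δ : ℕ => (q : ZMod k) = (p : ZMod k) + (Δ : ZMod k)) := by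
            rw [hmemT]
            refine ⟨by omega, by omega, ?_⟩
            rw [hsz, add_zero]
            exact hpq.symm
          have hchar : ∀ Δ ∈ (Finset.Icc (r - s) (min r (n - s))).filter
              (fun Δ : ℕ => (q : ZMod k) = (p : ZMod k) + (Δ : ZMod k)), Δ = 0 ∨ Δ = s := by
            intro Δ hΔ
            by_contra hcon
            push_neg at hcon
            have hsub : ({Δ, 0, s} : Finset ℕ) ⊆ (Finset.Icc (r - s) (min r (n - s))).filter
                (fun Δ : ℕ => (q : ZMod k) = (p : ZMod k) + (Δ : ZMod k)) := by
              intro z hz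
              simp only [Finset.mem_insert, Finset.mem_singleton] at hz
              rcases hz with rfl | rfl | rfl
              · exact hΔ
              · exact h0T
              · exact hsT
            have hcard : ({Δ, 0, s} : Finset ℕ).card = 3 := by
              rw [Finset.card_insert_of_notMem (by simp [hcon.1, hcon.2]),
                Finset.card_insert_of_notMem (by simp; omega), Finset.card_singleton]
            have hle := Finset.card_le_card hsub
            omega
          by_cases hor : (((p, r) : ℤ × ℕ) = (q, s) ∨ ((p, r) : ℤ × ℕ) = ωA n (q, s))
          · have hcond : p ≤ q ∧ q ≤ p + (r : ℤ) ∧ (r : ℤ) ≤ (q - p) + s ∧ (q - p) + (s : ℤ) ≤ n := by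
              rcases hor with h | h
              · rw [Prod.mk.injEq] at h
                obtain ⟨h1', h2'⟩ := h
                refine ⟨by omega, by omega, by omega, by omega⟩
              · rw [show ωA n ((q, s) : ℤ × ℕ) = (q + s - n, n - s) from rfl, Prod.mk.injEq] at h
                obtain ⟨h1', h2'⟩ := h
                refine ⟨by omega, by omega, by omega, by omega⟩
            rw [if_pos hcond, if_pos hor]
          · have hncond : ¬(p ≤ q ∧ q ≤ p + (r : ℤ) ∧ (r : ℤ) ≤ (q - p) + s ∧ (q - p) + (s : ℤ) ≤ n) := by
              intro hco
              rcases hchar _ (hiff hco) with h0 | h0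
              · refine hor (Or.inl ?_)
                rw [Prod.mk.injEq]
                exact ⟨by omega, by omega⟩
              · refine hor (Or.inr ?_)
                rw [show ωA n ((q, s) : ℤ × ℕ) = (q + s - n, n - s) from rfl, Prod.mk.injEq]
                exact ⟨by omega, by omega⟩
            rw [if_neg hncond, if_neg hor]
        · rw [if_neg (fun hh => hFix hh.2), if_pos (Or.inl hE1)] at hval
          have h0T : (0 : ℕ) ∈ (Finset.Icc (r - s) (min r (n - s))).filter
              (fun Δ : ℕ => (q : ZMod k) = (p : ZMod k) + (Δ : ZMod k)) := by
            rw [hmemT]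
            refine ⟨by omega, by omega, by simpa using hpq.symm⟩
          by_cases hor : (((p, r) : ℤ × ℕ) = (q, s) ∨ ((p, r) : ℤ × ℕ) = ωA n (q, s))
          · have hcond : p ≤ q ∧ q ≤ p + (r : ℤ) ∧ (r : ℤ) ≤ (q - p) + s ∧ (q - p) + (s : ℤ) ≤ n := by
              rcases hor with h | h
              · rw [Prod.mk.injEq] at h
                obtain ⟨h1', h2'⟩ := h
                refine ⟨by omega, by omega, by omega, by omega⟩
              · exact absurd (hE1.symm.trans (pi_of_eq_omegaA n k h)) hFix
            rw [if_pos hcond, if_pos hor]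
          · have hncond : ¬(p ≤ q ∧ q ≤ p + (r : ℤ) ∧ (r : ℤ) ≤ (q - p) + s ∧ (q - p) + (s : ℤ) ≤ n) := by
              intro hco
              have h1 := Finset.card_le_one.mp (le_of_eq hval) _ (hiff hco) _ h0T
              refine hor (Or.inl ?_)
              rw [Prod.mk.injEq]
              exact ⟨by omega, by omega⟩
            rw [if_neg hncond, if_neg hor]
      · by_cases hE2 : (((p : ℤ) : ZMod k), r) = ωQ n k (((q : ℤ) : ZMod k), s)
        · rw [if_neg (fun hh => hE1 hh.1), if_pos (Or.inr hE2)] at hval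
          have hr2 : r = n - s := congrArg Prod.snd hE2
          have hp2 : ((p : ℤ) : ZMod k)
              = ((q : ℤ) : ZMod k) + ((s : ℕ) : ZMod k) - ((n : ℕ) : ZMod k) :=
            congrArg Prod.fst hE2
          have hDT : (n - s) ∈ (Finset.Icc (r - s) (min r (n - s))).filter
              (fun Δ : ℕ => (q : ZMod k) = (p : ZMod k) + (Δ : ZMod k)) := by
            rw [hmemT]
            refine ⟨by omega, by omega, ?_⟩
            rw [Nat.cast_sub hcs, hp2]
            ring
          by_cases hor : (((p, r) : ℤ × ℕ) = (q, s) ∨ ((p, r) : ℤ × ℕ) = ωA n (q, s))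
          · have hcond : p ≤ q ∧ q ≤ p + (r : ℤ) ∧ (r : ℤ) ≤ (q - p) + s ∧ (q - p) + (s : ℤ) ≤ n := by
              rcases hor with h | h
              · exfalso
                apply hE1
                rw [Prod.mk.injEq] at h
                rw [Prod.mk.injEq]
                exact ⟨by rw [h.1], h.2⟩
              · rw [show ωA n ((q, s) : ℤ × ℕ) = (q + s - n, n - s) from rfl, Prod.mk.injEq] at h
                obtain ⟨h1', h2'⟩ := h
                refine ⟨by omega, by omega, by omega, by omega⟩
            rw [if_pos hcond, if_pos hor]
          · have hncond : ¬(p ≤ q ∧ q ≤ p + (r : ℤ) ∧ (r : ℤ) ≤ (q - p) + s ∧ (q - p) + (s : ℤ) ≤ n) := by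
              intro hco
              have h1 := Finset.card_le_one.mp (le_of_eq hval) _ (hiff hco) _ hDT
              refine hor (Or.inr ?_)
              rw [show ωA n ((q, s) : ℤ × ℕ) = (q + s - n, n - s) from rfl, Prod.mk.injEq]
              exact ⟨by omega, by omega⟩
            rw [if_neg hncond, if_neg hor]
        · rw [if_neg (fun hh => hE1 hh.1),
            if_neg (by rintro (h | h); exacts [hE1 h, hE2 h])] at hval
          have hnor : ¬(((p, r) : ℤ × ℕ) = (q, s) ∨ ((p, r) : ℤ × ℕ) = ωA n (q, s)) := by
            rintro (h | h)
            · apply hE1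
              rw [Prod.mk.injEq] at h
              rw [Prod.mk.injEq]
              exact ⟨by rw [h.1], h.2⟩
            · exact hE2 (pi_of_eq_omegaA n k h)
          have hncond : ¬(p ≤ q ∧ q ≤ p + (r : ℤ) ∧ (r : ℤ) ≤ (q - p) + s ∧ (q - p) + (s : ℤ) ≤ n) := by
            intro hco
            have hmm := hiff hco
            rw [Finset.card_eq_zero] at hval
            rw [hval] at hmm
            exact absurd hmm (Finset.notMem_empty _)
          rw [if_neg hncond, if_neg hnor]
  · rintro ⟨a1, a2, a3, a4⟩
    have ha1C : ∀ v ∈ C, v.2 ≤ n := by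
      intro v hv
      have hvP : (((v.1.val : ℤ), v.2) : ℤ × ℕ) ∈
          (fun v : ℤ × ℕ => (((v.1 : ℤ) : ZMod k), v.2)) ⁻¹' C := by
        show ((((v.1.val : ℤ)) : ZMod k), v.2) ∈ C
        rw [show ((((v.1.val : ℤ)) : ZMod k), v.2) = v from
          Prod.ext (cast_val_int k hk v.1) rfl]
        exact hv
      exact a1 _ hvP
    refine ⟨ha1C, ?_, ?_, ?_⟩
    · rintro ⟨aY, rY⟩ hy
      simp only at hy
      obtain ⟨c', hc'P, hpos⟩ := a2 ((aY.val : ℤ), rY) hy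
      obtain ⟨cq, cs⟩ := c'
      have hc'C : (((cq : ℤ) : ZMod k), cs) ∈ C := hc'P
      have hcs : cs ≤ n := a1 _ hc'P
      rw [hTotA_closed n (aY.val : ℤ) cq rY cs hy hcs] at hpos
      have hco : (aY.val : ℤ) ≤ cq ∧ cq ≤ (aY.val : ℤ) + rY ∧
          (rY : ℤ) ≤ (cq - (aY.val : ℤ)) + cs ∧ (cq - (aY.val : ℤ)) + (cs : ℤ) ≤ n := by
        by_contra hcon
        rw [if_neg hcon] at hpos
        exact Nat.lt_irrefl 0 hpos
      refine ⟨((cq : ZMod k), cs), hc'C, ?_⟩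
      rw [hTotQ_sum n k aY (cq : ZMod k) rY cs hy hcs]
      have hj : (cq - (aY.val : ℤ)).toNat ∈ Finset.Icc (rY - cs) (min rY (n - cs)) := by
        simp only [Finset.mem_Icc]
        omega
      have hstep : (if (cq : ZMod k) = aY + (((cq - (aY.val : ℤ)).toNat : ℕ) : ZMod k)
            then (1 : ℕ) else 0) ≤
          ∑ Δ ∈ Finset.Icc (rY - cs) (min rY (n - cs)),
            if (cq : ZMod k) = aY + (Δ : ZMod k) then 1 else 0 :=
        Finset.single_le_sum
          (f := fun Δ : ℕ => if (cq : ZMod k) = aY + (Δ : ZMod k) then 1 else 0)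
          (fun i _ => Nat.zero_le _) hj
      have hz : (cq : ZMod k) = aY + (((cq - (aY.val : ℤ)).toNat : ℕ) : ZMod k) := by
        have h0 : (((cq - (aY.val : ℤ)).toNat : ℕ) : ZMod k) = ((cq - (aY.val : ℤ) : ℤ) : ZMod k) := by
          rw [← Int.cast_natCast, Int.toNat_of_nonneg (by omega : (0:ℤ) ≤ cq - (aY.val : ℤ))]
        rw [h0, Int.cast_sub, cast_val_int k hk aY]
        ring
      rw [if_pos hz] at hstep
      omega
    · ext x
      constructor
      · rintro ⟨c, hcC, rfl⟩
        have hlift : (((c.1.val : ℤ), c.2) : ℤ × ℕ) ∈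
            (fun v : ℤ × ℕ => (((v.1 : ℤ) : ZMod k), v.2)) ⁻¹' C := by
          show ((((c.1.val : ℤ)) : ZMod k), c.2) ∈ C
          rw [show ((((c.1.val : ℤ)) : ZMod k), c.2) = c from
            Prod.ext (cast_val_int k hk c.1) rfl]
          exact hcC
        have hmem : ωA n ((c.1.val : ℤ), c.2) ∈
            (fun v : ℤ × ℕ => (((v.1 : ℤ) : ZMod k), v.2)) ⁻¹' C := by
          rw [← a3]
          exact Set.mem_image_of_mem _ hlift
        have hπ := pi_omegaA n k ((c.1.val : ℤ), c.2)
        rw [show ((((c.1.val : ℤ)) : ZMod k), c.2) = c from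
          Prod.ext (cast_val_int k hk c.1) rfl] at hπ
        rw [← hπ]
        exact hmem
      · intro hx
        have hx2 : x.2 ≤ n := ha1C _ hx
        have hlift : (((x.1.val : ℤ), x.2) : ℤ × ℕ) ∈
            (fun v : ℤ × ℕ => (((v.1 : ℤ) : ZMod k), v.2)) ⁻¹' C := by
          show ((((x.1.val : ℤ)) : ZMod k), x.2) ∈ C
          rw [show ((((x.1.val : ℤ)) : ZMod k), x.2) = x from
            Prod.ext (cast_val_int k hk x.1) rfl]
          exact hx
        rw [← a3] at hlift
        obtain ⟨w, hwP, hwx⟩ := hlift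
        refine ⟨(((w.1 : ℤ) : ZMod k), w.2), hwP, ?_⟩
        have hπ := pi_omegaA n k w
        rw [hwx] at hπ
        rw [← hπ]
        exact Prod.ext (cast_val_int k hk x.1) rfl
    · rintro ⟨cq, cs⟩ hcC ⟨dp, dr⟩ hdC
      have hlc : (((cq.val : ℤ), cs) : ℤ × ℕ) ∈
          (fun v : ℤ × ℕ => (((v.1 : ℤ) : ZMod k), v.2)) ⁻¹' C := by
        show ((((cq.val : ℤ)) : ZMod k), cs) ∈ C
        rw [show ((((cq.val : ℤ)) : ZMod k), cs) = ((cq, cs) : ZMod k × ℕ) from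
          Prod.ext (cast_val_int k hk cq) rfl]
        exact hcC
      have hcs : cs ≤ n := a1 _ hlc
      have hπd : (((dp.val : ℤ) : ZMod k), dr) = ((dp, dr) : ZMod k × ℕ) :=
        Prod.ext (cast_val_int k hk dp) rfl
      have hdP : (((dp.val : ℤ), dr) : ℤ × ℕ) ∈
          (fun v : ℤ × ℕ => (((v.1 : ℤ) : ZMod k), v.2)) ⁻¹' C := by
        show ((((dp.val : ℤ)) : ZMod k), dr) ∈ C
        rw [hπd]
        exact hdC
      have hdr : dr ≤ n := a1 _ hdP
      rw [hTotQ_sum n k dp cq dr cs hdr hcs]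
      simp only [Finset.sum_boole, Nat.cast_id]
      have hchar : ∀ Δ, Δ ∈ Finset.Icc (dr - cs) (min dr (n - cs)) → cq = dp + (Δ : ZMod k) →
          (((dp, dr) : ZMod k × ℕ) = (cq, cs) ∧ Δ = 0) ∨
          (((dp, dr) : ZMod k × ℕ) = ωQ n k (cq, cs) ∧ Δ = n - cs) := by
        intro Δ hΔ hΔz
        simp only [Finset.mem_Icc] at hΔ
        have hxP : ((((dp.val : ℤ) + Δ, cs)) : ℤ × ℕ) ∈
            (fun v : ℤ × ℕ => (((v.1 : ℤ) : ZMod k), v.2)) ⁻¹' C := by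
          show ((((dp.val : ℤ) + (Δ : ℤ) : ℤ) : ZMod k), cs) ∈ C
          have hcast : (((dp.val : ℤ) + (Δ : ℤ) : ℤ) : ZMod k) = cq := by
            rw [Int.cast_add, cast_val_int k hk dp, Int.cast_natCast]
            exact hΔz.symm
          rw [hcast]
          exact hcC
        have hA2 := a4 _ hxP _ hdP
        have hA1 : hTotA n ((dp.val : ℤ), dr) ((dp.val : ℤ) + Δ, cs) = 1 := by
          rw [hTotA_closed n (dp.val : ℤ) ((dp.val : ℤ) + Δ) dr cs hdr hcs,
            if_pos ⟨by omega, by omega, by omega, by omega⟩]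
        rw [hA1] at hA2
        by_cases h1 : (((dp.val : ℤ), dr) : ℤ × ℕ) = ((dp.val : ℤ) + Δ, cs)
        · left
          rw [Prod.mk.injEq] at h1
          have hΔ0 : Δ = 0 := by omega
          refine ⟨?_, hΔ0⟩
          rw [Prod.mk.injEq]
          have hqz : cq = dp := by
            rw [hΔz, hΔ0]
            simp
          exact ⟨hqz.symm, by omega⟩
        · by_cases h2 : (((dp.val : ℤ), dr) : ℤ × ℕ) = ωA n ((dp.val : ℤ) + Δ, cs)
          · right
            rw [show ωA n (((dp.val : ℤ) + Δ, cs) : ℤ × ℕ)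
                = ((dp.val : ℤ) + Δ + cs - n, n - cs) from rfl, Prod.mk.injEq] at h2
            obtain ⟨h21, h22⟩ := h2
            have hΔn : Δ = n - cs := by omega
            refine ⟨?_, hΔn⟩
            rw [Prod.mk.injEq]
            constructor
            · show dp = cq + (cs : ZMod k) - (n : ZMod k)
              have hq2 : cq = dp + ((n - cs : ℕ) : ZMod k) := by
                rw [← hΔn]
                exact hΔz
              rw [Nat.cast_sub hcs] at hq2
              linear_combination - hq2
            · exact h22
          · exfalso
            rw [if_neg (show ¬((((dp.val : ℤ), dr) : ℤ × ℕ) = ((dp.val : ℤ) + Δ, cs) ∧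
                (((dp.val : ℤ) + Δ, cs) : ℤ × ℕ) = ωA n ((dp.val : ℤ) + Δ, cs)) from
                fun hh => h1 hh.1),
              if_neg (by rintro (h | h); exacts [h1 h, h2 h])] at hA2
            exact one_ne_zero hA2
      by_cases hq1 : ((dp, dr) : ZMod k × ℕ) = (cq, cs)
      · have hrs : dr = cs := congrArg Prod.snd hq1
        have hq1f : dp = cq := congrArg Prod.fst hq1
        by_cases hq2 : ((dp, dr) : ZMod k × ℕ) = ωQ n k (cq, cs)
        · have hfix : ((cq, cs) : ZMod k × ℕ) = ωQ n k (cq, cs) := hq1.symm.trans hq2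
          rw [if_pos ⟨hq1, hfix⟩]
          have hrn : dr = n - cs := congrArg Prod.snd hq2
          have hne : (0 : ℕ) ≠ n - cs := by
            intro h0
            have hfx2 : cs = n - cs := congrArg Prod.snd hfix
            omega
          have hTT : (Finset.Icc (dr - cs) (min dr (n - cs))).filter
              (fun Δ : ℕ => cq = dp + (Δ : ZMod k)) = {0, n - cs} := by
            ext Δ
            simp only [Finset.mem_filter, Finset.mem_Icc, Finset.mem_insert,
              Finset.mem_singleton]
            constructor
            · rintro ⟨⟨hlo, hhi⟩, hz⟩
              rcases hchar Δ (Finset.mem_Icc.mpr ⟨hlo, hhi⟩) hz with ⟨-, h⟩ | ⟨-, h⟩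
              · exact Or.inl h
              · exact Or.inr h
            · rintro (rfl | rfl)
              · exact ⟨⟨by omega, by omega⟩, by simp [hq1f]⟩
              · refine ⟨⟨by omega, by omega⟩, ?_⟩
                have h1 := congrArg Prod.fst hq2
                rw [Nat.cast_sub hcs]
                show cq = dp + ((n : ZMod k) - cs)
                have h1' : dp = cq + (cs : ZMod k) - (n : ZMod k) := h1
                linear_combination - h1'
          rw [hTT, Finset.card_insert_of_notMem (by simpa using hne), Finset.card_singleton]
        · rw [if_neg (fun hh => hq2 (hq1.trans hh.2)), if_pos (Or.inl hq1)]
          have hTT : (Finset.Icc (dr - cs) (min dr (n - cs))).filter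
              (fun Δ : ℕ => cq = dp + (Δ : ZMod k)) = {0} := by
            ext Δ
            simp only [Finset.mem_filter, Finset.mem_Icc, Finset.mem_singleton]
            constructor
            · rintro ⟨⟨hlo, hhi⟩, hz⟩
              rcases hchar Δ (Finset.mem_Icc.mpr ⟨hlo, hhi⟩) hz with ⟨-, h⟩ | ⟨hh, -⟩
              · exact h
              · exact absurd hh hq2
            · rintro rfl
              exact ⟨⟨by omega, by omega⟩, by simp [hq1f]⟩
          rw [hTT, Finset.card_singleton]
      · by_cases hq2 : ((dp, dr) : ZMod k × ℕ) = ωQ n k (cq, cs)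
        · rw [if_neg (fun hh => hq1 hh.1), if_pos (Or.inr hq2)]
          have hrn : dr = n - cs := congrArg Prod.snd hq2
          have hTT : (Finset.Icc (dr - cs) (min dr (n - cs))).filter
              (fun Δ : ℕ => cq = dp + (Δ : ZMod k)) = {n - cs} := by
            ext Δ
            simp only [Finset.mem_filter, Finset.mem_Icc, Finset.mem_singleton]
            constructor
            · rintro ⟨⟨hlo, hhi⟩, hz⟩
              rcases hchar Δ (Finset.mem_Icc.mpr ⟨hlo, hhi⟩) hz with ⟨hh, -⟩ | ⟨-, h⟩
              · exact absurd hh hq1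
              · exact h
            · rintro rfl
              refine ⟨⟨by omega, by omega⟩, ?_⟩
              have h1' : dp = cq + (cs : ZMod k) - (n : ZMod k) := congrArg Prod.fst hq2
              rw [Nat.cast_sub hcs]
              show cq = dp + ((n : ZMod k) - cs)
              linear_combination - h1'
          rw [hTT, Finset.card_singleton]
        · rw [if_neg (fun hh => hq1 hh.1),
            if_neg (by rintro (h | h); exacts [hq1 h, hq2 h])]
          have hTT : (Finset.Icc (dr - cs) (min dr (n - cs))).filter
              (fun Δ : ℕ => cq = dp + (Δ : ZMod k)) = ∅ := by
            ext Δ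
            simp only [Finset.mem_filter, Finset.mem_Icc, Finset.notMem_empty, iff_false]
            rintro ⟨⟨hlo, hhi⟩, hz⟩
            rcases hchar Δ (Finset.mem_Icc.mpr ⟨hlo, hhi⟩) hz with ⟨hh, -⟩ | ⟨hh, -⟩
            · exact hq1 hh
            · exact hq2 hh
          rw [hTT, Finset.card_empty]


/-- Proposition 5.7 for `ℤA_{n+1}` modulo `⟨τ^k⟩`: with `π(q,s) = ((q : ZMod k), s)`,
a subset `C` of the vertices of the quotient quiver is a configuration iff
`π⁻¹ C` is a configuration of `ℤA_{n+1}`; consequently `C ↦ π⁻¹ C` is a bijection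
from the configurations of the quotient quiver onto the configurations `D` of
`ℤA_{n+1}` satisfying `τ^k D = D`. -/
theorem config_quotient_ZA (n k : ℕ) (hn : 1 ≤ n) (hk : 1 ≤ k) :
    (∀ C : Set (ZMod k × ℕ),
      IsConfigQ n k C ↔
        IsConfigA n ((fun v : ℤ × ℕ => (((v.1 : ℤ) : ZMod k), v.2)) ⁻¹' C)) ∧
      Set.BijOn
        (fun C : Set (ZMod k × ℕ) =>
          (fun v : ℤ × ℕ => (((v.1 : ℤ) : ZMod k), v.2)) ⁻¹' C)
        {C : Set (ZMod k × ℕ) | IsConfigQ n k C}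
        {D : Set (ℤ × ℕ) | IsConfigA n D ∧
          (fun v : ℤ × ℕ => (v.1 - (k : ℤ), v.2)) '' D = D} := by
  haveI : NeZero k := ⟨by omega⟩
  have hshiftcast : ∀ x : ℤ, ((x - (k : ℤ) : ℤ) : ZMod k) = ((x : ℤ) : ZMod k) := by
    intro x
    push_cast [ZMod.natCast_self]
    ring
  refine ⟨keyIff n k hn hk, ?_, ?_, ?_⟩
  · -- MapsTo
    intro C hC
    refine ⟨(keyIff n k hn hk C).mp hC, ?_⟩
    ext v
    constructor
    · rintro ⟨w, hw, rfl⟩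
      show (((w.1 - (k : ℤ) : ℤ) : ZMod k), w.2) ∈ C
      rw [hshiftcast]
      exact hw
    · intro hv
      refine ⟨(v.1 + k, v.2), ?_, ?_⟩
      · show (((v.1 + (k : ℤ) : ℤ) : ZMod k), v.2) ∈ C
        have : ((v.1 + (k : ℤ) : ℤ) : ZMod k) = ((v.1 : ℤ) : ZMod k) := by
          push_cast [ZMod.natCast_self]
          ring
        rw [this]
        exact hv
      · exact Prod.ext (by show v.1 + (k : ℤ) - k = v.1; ring) rfl
  · -- InjOn
    intro C1 _ C2 _ he
    have hsurj : Function.Surjective (fun v : ℤ × ℕ => (((v.1 : ℤ) : ZMod k), v.2)) := by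
      rintro ⟨a, s⟩
      exact ⟨((a.val : ℤ), s), Prod.ext (cast_val_int k hk a) rfl⟩
    exact hsurj.preimage_injective he
  · -- SurjOn
    rintro D ⟨hD, hshift⟩
    have hup : ∀ u ∈ D, ((u.1 + k, u.2) : ℤ × ℕ) ∈ D := by
      rintro ⟨u1, u2⟩ hu
      have hmem : ((u1, u2) : ℤ × ℕ) ∈ (fun v : ℤ × ℕ => (v.1 - (k : ℤ), v.2)) '' D := by
        rw [hshift]
        exact hu
      obtain ⟨⟨w1, w2⟩, hw, hwu⟩ := hmem
      have hwu' : ((w1 - (k : ℤ), w2) : ℤ × ℕ) = (u1, u2) := hwu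
      rw [Prod.mk.injEq] at hwu'
      obtain ⟨h1, h2⟩ := hwu'
      have hwe : ((w1, w2) : ℤ × ℕ) = (u1 + (k : ℤ), u2) := by
        rw [Prod.mk.injEq]
        exact ⟨by omega, h2⟩
      show ((u1 + (k : ℤ), u2) : ℤ × ℕ) ∈ D
      rwa [← hwe]
    have hdown : ∀ u ∈ D, ((u.1 - k, u.2) : ℤ × ℕ) ∈ D := by
      intro u hu
      rw [← hshift]
      exact ⟨u, hu, rfl⟩
    have hall : ∀ (j : ℤ) (u : ℤ × ℕ), u ∈ D → ((u.1 + j * k, u.2) : ℤ × ℕ) ∈ D := by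
      intro j
      induction j using Int.induction_on with
      | zero => intro u hu; simpa using hu
      | succ i ih =>
        intro u hu
        have := hup _ (ih u hu)
        have he : ((u.1 + (i : ℤ) * k, u.2) : ℤ × ℕ).1 + k = u.1 + ((i : ℤ) + 1) * k := by
          simp only
          ring
        rwa [he] at this
      | pred i ih =>
        intro u hu
        have := hdown _ (ih u hu)
        have he : ((u.1 + (-(i : ℤ)) * k, u.2) : ℤ × ℕ).1 - k = u.1 + (-(i : ℤ) - 1) * k := by
          simp only
          ring
        rwa [he] at this
    have hDD : (fun v : ℤ × ℕ => (((v.1 : ℤ) : ZMod k), v.2)) ⁻¹'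
        ((fun v : ℤ × ℕ => (((v.1 : ℤ) : ZMod k), v.2)) '' D) = D := by
      ext v
      obtain ⟨v1, v2⟩ := v
      constructor
      · intro hv
        obtain ⟨⟨w1, w2⟩, hw, hwv⟩ := hv
        have hwv' : ((((w1 : ℤ) : ZMod k), w2) : ZMod k × ℕ) = (((v1 : ℤ) : ZMod k), v2) := hwv
        rw [Prod.mk.injEq] at hwv'
        obtain ⟨h1, h2⟩ := hwv'
        rw [ZMod.intCast_eq_intCast_iff] at h1
        obtain ⟨j, hj⟩ := (Int.modEq_iff_dvd.mp h1)
        have hv1 : v1 = w1 + j * k := by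
          rw [mul_comm j (k : ℤ), ← hj]
          ring
        have hres := hall j ((w1, w2) : ℤ × ℕ) hw
        show ((v1, v2) : ℤ × ℕ) ∈ D
        have heq : (((w1, w2) : ℤ × ℕ).1 + j * k, ((w1, w2) : ℤ × ℕ).2) = ((v1, v2) : ℤ × ℕ) := by
          rw [Prod.mk.injEq]
          exact ⟨by omega, h2⟩
        rwa [heq] at hres
      · intro hv
        exact ⟨(v1, v2), hv, rfl⟩
    refine ⟨(fun v : ℤ × ℕ => (((v.1 : ℤ) : ZMod k), v.2)) '' D, ?_, hDD⟩
    show IsConfigQ n k _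
    rw [keyIff n k hn hk, hDD]
    exact hD
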